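/- arXiv:1911.01686 — 2 statements merged into one kernel-verified Lean document; each statement's English description precedes it below -/
import Mathlib

section
/- Let σ < 0, 0 < δt < Δt ≤ ΔT, α > 0 and L ≥ 1. Then there exists a real number μ* < 0 such that every complex root μ of the polynomial P either lies in the open disc D_σ or equals μ*. In particular, P has at most one root outside D_σ, and any such root is a negative real number. -/
open Finset in

/-- `β_τ = (1 - σ τ)^(-ΔT/τ)` (real exponent). -/
noncomputable def betaF (σ ΔT τ : ℝ) : ℝ := (1 - σ * τ) ^ (-(ΔT / τ))

/-- `γ_τ = (β_τ² - 1)/(σ (2 - σ τ))`. -/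
noncomputable def gammaF (σ ΔT τ : ℝ) : ℝ := ((betaF σ ΔT τ) ^ 2 - 1) / (σ * (2 - σ * τ))

/-- The polynomial `P(μ) = α μ^{2L-1} + (μγ - δγ) ∑_{ℓ=0}^{L-1} μ^{2(L-ℓ-1)} (μβ - δβ)^{2ℓ}`. -/
noncomputable def Ppoly (β δβ γ δγ α : ℝ) (L : ℕ) (μ : ℂ) : ℂ :=
  (α : ℂ) * μ ^ (2 * L - 1) +
    (μ * (γ : ℂ) - (δγ : ℂ)) *
      ∑ ℓ ∈ Finset.range L, μ ^ (2 * (L - ℓ - 1)) * (μ * (β : ℂ) - (δβ : ℂ)) ^ (2 * ℓ)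

/-- The open disc `D_σ` with center `μ₀ = -β δβ/(1-β²)` and radius `δβ/(1-β²)`. -/
noncomputable def Dsigma (β δβ : ℝ) : Set ℂ :=
  {μ : ℂ | ‖μ - ((-(β * δβ) / (1 - β ^ 2) : ℝ) : ℂ)‖ < δβ / (1 - β ^ 2)}

open Finset


lemma log_ratio_strictAnti : StrictAntiOn (fun x : ℝ => Real.log (1 + x) / x) (Set.Ioi 0) := by
  have hderiv : ∀ x ∈ Set.Ioi (0:ℝ), HasDerivAt (fun x : ℝ => Real.log (1 + x) / x)
      ((x / (1 + x) - Real.log (1 + x)) / x ^ 2) x := by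
    intro x hx
    have hx0 : (0:ℝ) < x := hx
    have h1x : (0:ℝ) < 1 + x := by linarith
    have h1 : HasDerivAt (fun x : ℝ => Real.log (1 + x)) (1 / (1 + x)) x := by
      have := ((hasDerivAt_id x).const_add (1:ℝ)).log h1x.ne'
      simpa using this
    have h2 := h1.div (hasDerivAt_id x) hx0.ne'
    refine h2.congr_deriv ?_
    simp only [id_eq]
    ring
  apply strictAntiOn_of_deriv_neg (convex_Ioi 0)
  · exact fun x hx => (hderiv x hx).continuousAt.continuousWithinAt
  · intro x hx
    rw [interior_Ioi] at hx
    rw [(hderiv x hx).deriv]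
    have hx0 : (0:ℝ) < x := hx
    have h1x : (0:ℝ) < 1 + x := by linarith
    have hlog : x / (1 + x) < Real.log (1 + x) := by
      have hne : ((1+x)⁻¹ : ℝ) ≠ 1 := by
        intro h
        rw [inv_eq_one] at h
        linarith
      have h := Real.log_lt_sub_one_of_pos (inv_pos.2 h1x) hne
      rw [Real.log_inv] at h
      have hxx : (1:ℝ) - (1+x)⁻¹ = x / (1+x) := by field_simp; ring
      linarith [hxx ▸ (by linarith : (1:ℝ) - (1+x)⁻¹ < Real.log (1+x))]
    apply div_neg_of_neg_of_pos
    · linarith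
    · positivity

lemma betaF_pos {σ ΔT τ : ℝ} (hσ : σ < 0) (hτ : 0 < τ) : 0 < betaF σ ΔT τ :=
  Real.rpow_pos_of_pos (by nlinarith) _

lemma betaF_lt_one {σ ΔT τ : ℝ} (hσ : σ < 0) (hτ : 0 < τ) (hT : 0 < ΔT) :
    betaF σ ΔT τ < 1 :=
  Real.rpow_lt_one_of_one_lt_of_neg (by nlinarith)
    (by have : 0 < ΔT / τ := div_pos hT hτ; linarith)

lemma deltaBeta_pos {σ δt Δt ΔT : ℝ} (hσ : σ < 0) (hδt : 0 < δt) (hδtΔt : δt < Δt)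
    (hΔtΔT : Δt ≤ ΔT) : betaF σ ΔT δt < betaF σ ΔT Δt := by
  have hΔ : (0:ℝ) < Δt := by linarith
  have hT : (0:ℝ) < ΔT := by linarith
  have hxδ : (0:ℝ) < -σ * δt := by nlinarith
  have hxΔ : (0:ℝ) < -σ * Δt := by nlinarith
  have key := log_ratio_strictAnti (Set.mem_Ioi.2 hxδ) (Set.mem_Ioi.2 hxΔ) (by nlinarith)
  simp only at key
  rw [div_lt_div_iff₀ hxΔ hxδ] at key
  have hσ' : (0:ℝ) < -σ := by linarith
  have hkey2 : Real.log (1 + -σ*Δt) * δt < Real.log (1 + -σ*δt) * Δt := by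
    have h1 : (Real.log (1 + -σ*Δt) * δt) * (-σ) < (Real.log (1 + -σ*δt) * Δt) * (-σ) := by
      nlinarith [key]
    exact lt_of_mul_lt_mul_right h1 hσ'.le
  unfold betaF
  rw [Real.rpow_def_of_pos (by nlinarith), Real.rpow_def_of_pos (by nlinarith)]
  apply Real.exp_lt_exp.2
  have e1 : (1 : ℝ) - σ * δt = 1 + -σ * δt := by ring
  have e2 : (1 : ℝ) - σ * Δt = 1 + -σ * Δt := by ring
  rw [e1, e2, mul_neg, mul_neg, neg_lt_neg_iff, mul_div_assoc', mul_div_assoc',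
    div_lt_div_iff₀ hΔ hδt]
  nlinarith [hkey2, hT]

lemma gammaF_pos {σ ΔT τ : ℝ} (hσ : σ < 0) (hτ : 0 < τ) (hT : 0 < ΔT) :
    0 < gammaF σ ΔT τ := by
  unfold gammaF
  apply div_pos_iff.2
  right
  constructor
  · nlinarith [betaF_pos (σ := σ) (ΔT := ΔT) hσ hτ, betaF_lt_one (σ := σ) (ΔT := ΔT) hσ hτ hT]
  · nlinarith [mul_nonneg (mul_self_nonneg σ) hτ.le]

lemma deltaGamma_neg {σ δt Δt ΔT : ℝ} (hσ : σ < 0) (hδt : 0 < δt) (hδtΔt : δt < Δt)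
    (hΔtΔT : Δt ≤ ΔT) : gammaF σ ΔT Δt < gammaF σ ΔT δt := by
  have hΔ : (0:ℝ) < Δt := by linarith
  have hT : (0:ℝ) < ΔT := by linarith
  have hβδ0 := betaF_pos (σ := σ) (ΔT := ΔT) hσ hδt
  have hβΔ1 := betaF_lt_one (σ := σ) (ΔT := ΔT) hσ hΔ hT
  have hδβ := deltaBeta_pos hσ hδt hδtΔt hΔtΔT
  unfold gammaF
  have e1 : ∀ τ : ℝ, 0 < τ → ((betaF σ ΔT τ) ^ 2 - 1) / (σ * (2 - σ * τ)) =
      (1 - (betaF σ ΔT τ) ^ 2) / ((-σ) * (2 - σ * τ)) := by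
    intro τ hτ
    have hd : σ * (2 - σ * τ) < 0 := by
      nlinarith [mul_nonneg (mul_self_nonneg σ) hτ.le]
    rw [div_eq_div_iff hd.ne (by nlinarith [mul_nonneg (mul_self_nonneg σ) hτ.le] : (-σ) * (2 - σ * τ) ≠ 0)]
    ring
  rw [e1 δt hδt, e1 Δt hΔ]
  have hdδ : (0:ℝ) < (-σ) * (2 - σ * δt) := by nlinarith [mul_nonneg (mul_self_nonneg σ) hδt.le]
  have hdΔ : (0:ℝ) < (-σ) * (2 - σ * Δt) := by nlinarith [mul_nonneg (mul_self_nonneg σ) hΔ.le]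
  rw [div_lt_div_iff₀ hdΔ hdδ]
  have hβδ1 : betaF σ ΔT δt < 1 := betaF_lt_one hσ hδt hT
  have hβΔ0 : 0 < betaF σ ΔT Δt := betaF_pos hσ hΔ
  have hσ' : (0:ℝ) < -σ := by linarith
  have h1 : (0:ℝ) < betaF σ ΔT Δt ^ 2 - betaF σ ΔT δt ^ 2 := by nlinarith
  have h2 : -σ * (2 - σ * δt) < -σ * (2 - σ * Δt) := by
    nlinarith [mul_pos (mul_pos hσ' hσ') (sub_pos.2 hδtΔt)]
  have h3 : (0:ℝ) < 1 - betaF σ ΔT δt ^ 2 := by nlinarith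
  nlinarith [mul_pos h1 hdδ, mul_pos h3 (sub_pos.2 h2)]


/-- elementary inequality: `(1+q)(1-q^L) ≥ 2L q^L (1-q)` for `q ∈ [0,1]`. -/
lemma lemH_aux {q : ℝ} (hq0 : 0 ≤ q) (hq1 : q ≤ 1) (L : ℕ) :
    2 * L * q ^ L * (1 - q) ≤ (1 + q) * (1 - q ^ L) := by
  have key : ∀ j, j ≤ L → q ^ L ≤ q ^ j := fun j hj => pow_le_pow_of_le_one hq0 hq1 hj
  have hgeom : (1 + q) * (1 - q ^ L) = (1 - q) * ∑ j ∈ range L, (q ^ j + q ^ (j+1)) := by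
    have h := geom_sum_mul q L
    have : (∑ i ∈ range L, q ^ i) * (q - 1) = q ^ L - 1 := h
    have hsum : ∑ j ∈ range L, (q ^ j + q ^ (j+1)) = (1 + q) * ∑ j ∈ range L, q ^ j := by
      rw [Finset.sum_add_distrib, add_mul, one_mul]
      congr 1
      rw [Finset.mul_sum]
      exact Finset.sum_congr rfl fun j _ => by ring
    rw [hsum]
    nlinarith [h]
  rw [hgeom]
  have hsumge : (2 * L) * q ^ L ≤ ∑ j ∈ range L, (q ^ j + q ^ (j+1)) := by
    have : ∀ j ∈ range L, q ^ L + q ^ L ≤ q ^ j + q ^ (j+1) := by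
      intro j hj
      have hj' : j < L := Finset.mem_range.1 hj
      exact add_le_add (key j hj'.le) (key (j+1) hj')
    calc (2 * L : ℝ) * q ^ L = ∑ _j ∈ range L, (q ^ L + q ^ L) := by
          rw [Finset.sum_const, card_range]; push_cast; ring
      _ ≤ _ := Finset.sum_le_sum this
  have h1q : 0 ≤ 1 - q := by linarith
  calc 2 * L * q ^ L * (1 - q) = (1 - q) * ((2 * L) * q ^ L) := by ring
    _ ≤ (1 - q) * ∑ j ∈ range L, (q ^ j + q ^ (j+1)) := by
        apply mul_le_mul_of_nonneg_left hsumge h1q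
    _ = _ := rfl

/-- `1 + q - (2L+1)q^L + (2L-1)q^{L+1} ≥ 0` for `q ∈ [0,1]`, `L ≥ 1`. -/
lemma lemH {q : ℝ} (hq0 : 0 ≤ q) (hq1 : q ≤ 1) (L : ℕ) :
    0 ≤ 1 + q - (2*L+1) * q ^ L + (2*L-1) * q ^ (L+1) := by
  have h := lemH_aux hq0 hq1 L
  have : (1 + q) * (1 - q ^ L) - 2 * L * q ^ L * (1 - q)
      = 1 + q - (2*L+1) * q ^ L + (2*L-1) * q ^ (L+1) := by ring
  linarith [this ▸ sub_nonneg.2 h]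

/-- `|Im(z^n)| ≤ n |z|^{n-1} Im z` for `Im z ≥ 0`. -/
lemma im_pow_le (z : ℂ) (hz : 0 ≤ z.im) : ∀ n : ℕ,
    |(z ^ n).im| ≤ n * (‖z‖) ^ (n-1) * z.im := by
  intro n
  induction n with
  | zero => simp
  | succ n ih =>
    rw [pow_succ, Complex.mul_im]
    have habs := norm_nonneg z
    have h1 : |(z ^ n).re * z.im + (z ^ n).im * z.re|
        ≤ |(z ^ n).re| * z.im + |(z ^ n).im| * |z.re| := by
      calc _ ≤ |(z ^ n).re * z.im| + |(z ^ n).im * z.re| := abs_add_le _ _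
        _ = |(z ^ n).re| * z.im + |(z ^ n).im| * |z.re| := by
            rw [abs_mul, abs_mul, abs_of_nonneg hz]
    have h2 : |(z ^ n).re| ≤ (‖z‖) ^ n := by
      calc |(z ^ n).re| ≤ ‖z ^ n‖ := Complex.abs_re_le_norm _
        _ = (‖z‖) ^ n := norm_pow _ _
    have h3 : |z.re| ≤ ‖z‖ := Complex.abs_re_le_norm z
    have h4 : |(z ^ n).im| * |z.re| ≤ (n * (‖z‖) ^ (n-1) * z.im) * ‖z‖ := by
      apply mul_le_mul ih h3 (abs_nonneg _)
      positivity
    have h5 : (n : ℝ) * (‖z‖) ^ (n-1) * z.im * ‖z‖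
        ≤ n * (‖z‖) ^ n * z.im := by
      rcases Nat.eq_zero_or_pos n with rfl | hn
      · simp
      · have : (‖z‖) ^ (n-1) * ‖z‖ = (‖z‖) ^ n := by
          rw [← pow_succ, Nat.sub_add_cancel hn]
        calc (n : ℝ) * (‖z‖) ^ (n-1) * z.im * ‖z‖
            = n * ((‖z‖) ^ (n-1) * ‖z‖) * z.im := by ring
          _ ≤ n * (‖z‖) ^ n * z.im := by rw [this]
    have h6 : |(z^n).re| * z.im ≤ (‖z‖) ^ n * z.im := by
      apply mul_le_mul_of_nonneg_right h2 hz
    calc |(z ^ n).re * z.im + (z ^ n).im * z.re| ≤ _ := h1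
      _ ≤ (‖z‖) ^ n * z.im + n * (‖z‖) ^ n * z.im := by linarith
      _ = (↑(n+1)) * (‖z‖) ^ ((n+1)-1) * z.im := by push_cast; ring

set_option maxHeartbeats 1000000 in
/-- Fejér-type positivity: `Im ∑_{ℓ<L} s^{2ℓ+1} ≥ 0` on the closed upper half disc. -/
lemma lemT {s : ℂ} (hs : ‖s‖ ≤ 1) (him : 0 ≤ s.im) (L : ℕ) (hL : 1 ≤ L) :
    0 ≤ (∑ ℓ ∈ range L, s ^ (2*ℓ+1)).im := by
  set T := ∑ ℓ ∈ range L, s ^ (2*ℓ+1) with hT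
  rcases eq_or_lt_of_le him with him0 | himpos
  · have hsr : s = (s.re : ℂ) := Complex.ext rfl him0.symm
    rw [hT, hsr]
    rw [Complex.im_sum]
    apply Finset.sum_nonneg
    intro i _
    rw [← Complex.ofReal_pow, Complex.ofReal_im]
  · have hs2ne : s ^ 2 - 1 ≠ 0 := by
      intro h
      have h2 : (s - 1) * (s + 1) = 0 := by linear_combination h
      rcases mul_eq_zero.mp h2 with h1 | h1
      · have : s = 1 := by linear_combination h1
        rw [this] at himpos; simp at himpos
      · have : s = -1 := by linear_combination h1
        rw [this] at himpos
        simp at himpos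
    -- key identity : T * (s^2 - 1) = s^(2L+1) - s
    have hTid : T * (s ^ 2 - 1) = s ^ (2*L+1) - s := by
      have hg := geom_sum_mul (s ^ 2) L
      have hTs : T = s * ∑ ℓ ∈ range L, (s ^ 2) ^ ℓ := by
        rw [hT, Finset.mul_sum]
        exact Finset.sum_congr rfl fun ℓ _ => by rw [← pow_mul]; ring
      calc T * (s ^ 2 - 1) = s * ((∑ ℓ ∈ range L, (s ^ 2) ^ ℓ) * (s ^ 2 - 1)) := by
            rw [hTs]; ring
        _ = s * ((s ^ 2) ^ L - 1) := by rw [hg]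
        _ = s ^ (2*L+1) - s := by rw [← pow_mul]; ring
    set w := (starRingEnd ℂ) s with hw
    have hws : s * w = (Complex.normSq s : ℂ) := Complex.mul_conj s
    set ρ := Complex.normSq s with hρ
    set y := s.im with hy
    -- multiplied identity
    have hmul : T * ((Complex.normSq (s ^ 2 - 1) : ℝ) : ℂ)
        = (s ^ (2*L+1) - s) * ((starRingEnd ℂ) (s ^ 2 - 1)) := by
      rw [← Complex.mul_conj (s ^ 2 - 1), ← hTid]; ring
    have hν : 0 < Complex.normSq (s ^ 2 - 1) := Complex.normSq_pos.2 hs2ne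
    -- it suffices to show RHS.im ≥ 0
    have hTim : T.im * Complex.normSq (s ^ 2 - 1)
        = ((s ^ (2*L+1) - s) * ((starRingEnd ℂ) (s ^ 2 - 1))).im := by
      rw [← hmul, Complex.mul_im]
      simp
    suffices hN : 0 ≤ ((s ^ (2*L+1) - s) * ((starRingEnd ℂ) (s ^ 2 - 1))).im by
      by_contra hneg
      push_neg at hneg
      nlinarith [hTim, hν]
    -- expand RHS
    have hexp : (s ^ (2*L+1) - s) * ((starRingEnd ℂ) (s ^ 2 - 1))
        = ((ρ^2 : ℝ) : ℂ) * s ^ (2*L-1) - s ^ (2*L+1) - ((ρ : ℝ) : ℂ) * w + s := by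
      have hconj : (starRingEnd ℂ) (s ^ 2 - 1) = w ^ 2 - 1 := by
        rw [map_sub, map_pow, map_one]
      rw [hconj]
      have hpow1 : s ^ (2*L+1) = s ^ (2*L-1) * s ^ 2 := by
        rw [← pow_add]; congr 1; omega
      have hpow2 : s ^ (2*L+1) * w ^ 2 = ((ρ^2 : ℝ) : ℂ) * s ^ (2*L-1) := by
        rw [hpow1]
        push_cast
        calc s ^ (2*L-1) * s ^ 2 * w ^ 2 = s ^ (2*L-1) * (s * w) ^ 2 := by ring
          _ = s ^ (2*L-1) * ((ρ:ℝ):ℂ) ^ 2 := by rw [hws]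
          _ = ((ρ:ℝ):ℂ) ^ 2 * s ^ (2*L-1) := by ring
      have hsw2 : s * w ^ 2 = ((ρ : ℝ) : ℂ) * w := by
        calc s * w ^ 2 = (s * w) * w := by ring
          _ = ((ρ : ℝ) : ℂ) * w := by rw [hws]
      calc (s ^ (2*L+1) - s) * (w ^ 2 - 1)
          = s ^ (2*L+1) * w ^ 2 - s ^ (2*L+1) - s * w ^ 2 + s := by ring
        _ = _ := by rw [hpow2, hsw2]
    rw [hexp]
    -- compute imaginary part
    have him1 : (((ρ^2 : ℝ) : ℂ) * s ^ (2*L-1) - s ^ (2*L+1) - ((ρ : ℝ) : ℂ) * w + s).im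
        = ρ^2 * (s ^ (2*L-1)).im - (s ^ (2*L+1)).im + ρ * y + y := by
      simp [Complex.sub_im, Complex.add_im, Complex.im_ofReal_mul, hw, Complex.conj_im,
        ← Complex.ofReal_pow]
      rfl
    rw [him1]
    -- the bridge : I2 - ρ I1 = 2 y R
    set I1 := (s ^ (2*L-1)).im
    set I2 := (s ^ (2*L+1)).im
    set R := (s ^ (2*L)).re
    have hbridge : I2 - ρ * I1 = 2 * y * R := by
      have hid : s ^ (2*L+1) - ((ρ : ℝ):ℂ) * s ^ (2*L-1) = s ^ (2*L) * (s - w) := by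
        have h1 : s ^ (2*L+1) = s ^ (2*L) * s := by rw [← pow_succ]
        have h2 : s ^ (2*L) * w = ((ρ : ℝ):ℂ) * s ^ (2*L-1) := by
          have h3 : s ^ (2*L) = s ^ (2*L-1) * s := by rw [← pow_succ]; congr 1; omega
          rw [h3]
          calc s ^ (2*L-1) * s * w = s ^ (2*L-1) * (s * w) := by ring
            _ = ((ρ : ℝ):ℂ) * s ^ (2*L-1) := by rw [hws]; ring
        rw [mul_sub, h2, ← h1]
      have him2 : (s ^ (2*L+1) - ((ρ : ℝ):ℂ) * s ^ (2*L-1)).im = I2 - ρ * I1 := by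
        simp [Complex.sub_im, Complex.im_ofReal_mul]
        rfl
      have him3 : (s ^ (2*L) * (s - w)).im = 2 * y * R := by
        rw [Complex.mul_im]
        have h4 : (s - w).re = 0 := by simp [hw, Complex.sub_re, Complex.conj_re]
        have h5 : (s - w).im = 2 * y := by simp [hw, Complex.sub_im, Complex.conj_im]; ring
        rw [h4, h5]; ring
      rw [← him2, hid, him3]
    -- bounds
    set a := ‖s‖ with ha
    have ha0 : 0 ≤ a := norm_nonneg s
    have hρa : ρ = a ^ 2 := (Complex.sq_norm s).symm
    have hI2 : |I2| ≤ (2*L+1) * a ^ (2*L) * y := by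
      have := im_pow_le s him (2*L+1)
      simpa using this
    have hR : |R| ≤ a ^ (2*L) := by
      calc |R| ≤ ‖s ^ (2*L)‖ := Complex.abs_re_le_norm _
        _ = a ^ (2*L) := norm_pow _ _
    have hq := lemH (q := a ^ 2) (by positivity) (by nlinarith) L
    have hpowL : (a ^ 2) ^ L = a ^ (2*L) := by rw [← pow_mul]
    have hpowL1 : (a ^ 2) ^ (L+1) = a ^ (2*L) * a ^ 2 := by
      rw [pow_succ, hpowL]
    rw [hpowL, hpowL1] at hq
    -- conclude
    have key : ρ^2 * I1 - I2 + ρ * y + y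
        = y * (1 + ρ) - (1 - ρ) * I2 - ρ * (2 * y * R) := by
      rw [← hbridge]; ring
    rw [key, hρa]
    have hb1 : (1 - a^2) * I2 ≤ (1 - a^2) * ((2*L+1) * a ^ (2*L) * y) := by
      apply mul_le_mul_of_nonneg_left (le_trans (le_abs_self _) hI2)
      nlinarith
    have hb2 : a^2 * (2 * y * R) ≤ a^2 * (2 * y * (a ^ (2*L))) := by
      apply mul_le_mul_of_nonneg_left _ (by positivity)
      have : R ≤ a ^ (2*L) := le_trans (le_abs_self _) hR
      nlinarith [himpos.le]
    have hb3 : 0 ≤ y * (1 + a^2 - (2*L+1) * a ^ (2*L) + (2*L-1) * (a ^ (2*L) * a^2)) :=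
      mul_nonneg himpos.le hq
    linarith [hb1, hb2, hb3]

set_option maxHeartbeats 1000000 in
lemma key_root (b e g h α : ℝ) (L : ℕ) (hb0 : 0 < b) (hb1 : b < 1) (he : 0 < e)
    (hg : 0 < g) (hh : h < 0) (hα : 0 < α) (hL : 1 ≤ L) (μ : ℂ)
    (hroot : Ppoly b e g h α L μ = 0) (hout : μ ∉ Dsigma b e) :
    ∃ t : ℝ, b < t ∧ t ≤ 1 ∧
      ((-h/e) * t - (g + (-h/e) * b)) * (∑ ℓ ∈ range L, t ^ (2*ℓ)) = α ∧
      μ = ((e/(b - t) : ℝ) : ℂ) := by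
  set d : ℝ := -h/e with hd
  set c : ℝ := g + d * b with hc
  have hd0 : 0 < d := div_pos (by linarith) he
  have hc0 : 0 < c := by nlinarith
  -- μ ≠ 0
  have hμ0 : μ ≠ 0 := by
    rintro rfl
    unfold Ppoly at hroot
    rw [zero_pow (by omega : 2*L - 1 ≠ 0), mul_zero, zero_add] at hroot
    rw [Finset.sum_eq_single_of_mem (L-1) (Finset.mem_range.2 (by omega))
      (fun ℓ hℓ hne => by
        rw [zero_pow (by
          have := Finset.mem_range.1 hℓ
          omega : 2 * (L - ℓ - 1) ≠ 0), zero_mul])] at hroot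
    rw [show 2 * (L - (L-1) - 1) = 0 by omega, pow_zero, one_mul] at hroot
    rcases mul_eq_zero.mp hroot with h1 | h1
    · have h2 : (h:ℂ) = 0 := by linear_combination -h1
      rw [Complex.ofReal_eq_zero] at h2
      linarith
    · have h2 : ((0:ℂ) * b - e) ≠ 0 := by
        simp only [zero_mul, zero_sub, neg_ne_zero, ne_eq, Complex.ofReal_eq_zero]
        linarith
      exact pow_ne_zero _ h2 h1
  -- the substitution s
  set s : ℂ := (b:ℂ) - (e:ℂ)/μ with hs
  have heC : (e:ℂ) ≠ 0 := Complex.ofReal_ne_zero.2 he.ne'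
  have hμs : μ * (b:ℂ) - (e:ℂ) = μ * s := by
    rw [hs]
    field_simp
  -- |s| ≤ 1
  have habs : ‖s‖ ≤ 1 := by
    have hb2 : (0:ℝ) < 1 - b^2 := by nlinarith
    set m : ℝ := -(b * e) / (1 - b ^ 2) with hmdef
    set r : ℝ := e / (1 - b ^ 2) with hrdef
    have hout' : r ≤ ‖μ - (m:ℂ)‖ := by
      simp only [Dsigma, Set.mem_setOf_eq, not_lt] at hout
      exact hout
    have hr0 : 0 ≤ r := le_of_lt (div_pos he hb2)
    have h1 : r^2 ≤ (μ.re - m)^2 + μ.im^2 := by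
      calc r^2 ≤ (‖μ - (m:ℂ)‖)^2 := by
            apply pow_le_pow_left₀ hr0 hout'
        _ = (μ.re - m)^2 + μ.im^2 := by
            rw [Complex.sq_norm, Complex.normSq_apply, Complex.sub_re, Complex.sub_im,
              Complex.ofReal_re, Complex.ofReal_im]
            ring
    have hrm : r * (1 - b^2) = e := by rw [hrdef]; field_simp
    have hmm : m * (1 - b^2) = -(b*e) := by rw [hmdef]; field_simp
    have hq : e^2 ≤ (μ.re*(1-b^2) + b*e)^2 + μ.im^2*(1-b^2)^2 := by
      have h3 := mul_le_mul_of_nonneg_right h1 (sq_nonneg (1-b^2))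
      calc e^2 = r^2 * (1-b^2)^2 := by rw [← hrm]; ring
        _ ≤ ((μ.re - m)^2 + μ.im^2) * (1-b^2)^2 := by nlinarith [h3]
        _ = ((μ.re - m)*(1-b^2))^2 + μ.im^2*(1-b^2)^2 := by ring
        _ = (μ.re*(1-b^2) + b*e)^2 + μ.im^2*(1-b^2)^2 := by
            rw [show (μ.re - m)*(1-b^2) = μ.re*(1-b^2) - m*(1-b^2) by ring, hmm]
            ring
    have hkey : Complex.normSq (μ * (b:ℂ) - (e:ℂ)) ≤ Complex.normSq μ := by
      simp only [Complex.normSq_apply, Complex.sub_re, Complex.sub_im,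
        Complex.mul_re, Complex.mul_im, Complex.ofReal_re, Complex.ofReal_im]
      nlinarith [hq, hb2]
    have habsle : ‖μ * s‖ ≤ ‖μ‖ := by
      rw [← hμs, Complex.norm_def, Complex.norm_def]
      exact Real.sqrt_le_sqrt hkey
    rw [norm_mul] at habsle
    have hμpos : 0 < ‖μ‖ := by
      exact norm_pos_iff.2 hμ0
    nlinarith [habsle, norm_nonneg s]
  -- the reduced scalar equation
  set K : ℂ := ∑ ℓ ∈ range L, s ^ (2*ℓ) with hK
  have heq : ((d:ℂ) * s - (c:ℂ)) * K = (α:ℂ) := by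
    have hsum : ∑ ℓ ∈ range L, μ ^ (2 * (L - ℓ - 1)) * (μ * (b:ℂ) - (e:ℂ)) ^ (2 * ℓ)
        = μ ^ (2*L - 2) * K := by
      rw [hK, Finset.mul_sum]
      apply Finset.sum_congr rfl
      intro ℓ hℓ
      have hℓL : ℓ < L := Finset.mem_range.1 hℓ
      rw [hμs, mul_pow, ← mul_assoc, ← pow_add]
      congr 2
      omega
    unfold Ppoly at hroot
    rw [hsum] at hroot
    have hpow : μ ^ (2*L - 1) = μ ^ (2*L - 2) * μ := by
      rw [← pow_succ]
      congr 1
      omega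
    rw [hpow] at hroot
    have hfact : μ ^ (2*L-2) * ((α:ℂ) * μ + (μ * (g:ℂ) - (h:ℂ)) * K) = 0 := by
      linear_combination hroot
    have hred : (α:ℂ) * μ + (μ * (g:ℂ) - (h:ℂ)) * K = 0 :=
      (mul_eq_zero.mp hfact).resolve_left (pow_ne_zero _ hμ0)
    have hce : (c:ℂ) = (g:ℂ) + (d:ℂ) * (b:ℂ) := by rw [hc]; push_cast; ring
    have hde : (d:ℂ) * (e:ℂ) = -(h:ℂ) := by
      rw [hd]
      push_cast
      field_simp
    have h2 : μ * s - μ * (b:ℂ) = -(e:ℂ) := by rw [← hμs]; ring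
    have h1 : μ * ((d:ℂ) * s - (c:ℂ)) = -(μ * (g:ℂ) - (h:ℂ)) := by
      rw [hce]
      calc μ * ((d:ℂ) * s - ((g:ℂ) + (d:ℂ) * (b:ℂ)))
          = (d:ℂ) * (μ * s - μ * (b:ℂ)) - μ * (g:ℂ) := by ring
        _ = (d:ℂ) * (-(e:ℂ)) - μ * (g:ℂ) := by rw [h2]
        _ = -(μ * (g:ℂ) - (h:ℂ)) := by rw [show (d:ℂ) * (-(e:ℂ)) = -((d:ℂ)*(e:ℂ)) by ring, hde]; ring
    have hgoal : μ * (((d:ℂ) * s - (c:ℂ)) * K - (α:ℂ)) = 0 := by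
      calc μ * (((d:ℂ) * s - (c:ℂ)) * K - (α:ℂ))
          = (μ * ((d:ℂ) * s - (c:ℂ))) * K - (α:ℂ) * μ := by ring
        _ = (-(μ * (g:ℂ) - (h:ℂ))) * K - (α:ℂ) * μ := by rw [h1]
        _ = -((α:ℂ) * μ + (μ * (g:ℂ) - (h:ℂ)) * K) := by ring
        _ = 0 := by rw [hred]; ring
    have hfin := (mul_eq_zero.mp hgoal).resolve_left hμ0
    linear_combination hfin
  -- realness of s
  have hsim : s.im = 0 := by
    by_contra hne
    set W : ℝ := (∑ ℓ ∈ range L, s^(2*ℓ+1)).im with hW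
    have hsK : s * K = ∑ ℓ ∈ range L, s^(2*ℓ+1) := by
      rw [hK, Finset.mul_sum]
      exact Finset.sum_congr rfl fun ℓ _ => by rw [pow_succ]; ring
    have hKim : d * W = c * K.im := by
      have h1 : (((d:ℂ) * s - (c:ℂ)) * K).im = 0 := by rw [heq]; simp
      have h2 : ((d:ℂ) * s - (c:ℂ)) * K = (d:ℂ) * (s * K) - (c:ℂ) * K := by ring
      rw [h2, hsK, Complex.sub_im, Complex.im_ofReal_mul, Complex.im_ofReal_mul] at h1
      rw [hW]
      linarith
    set v : ℂ := (d:ℂ) * s - (c:ℂ) with hv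
    have hvim : v.im = d * s.im := by
      rw [hv, Complex.sub_im, Complex.im_ofReal_mul, Complex.ofReal_im]
      ring
    have hconjv : ((Complex.normSq v : ℝ) : ℂ) * K = (α:ℂ) * (starRingEnd ℂ) v := by
      calc ((Complex.normSq v : ℝ) : ℂ) * K = (v * (starRingEnd ℂ) v) * K := by
            rw [Complex.mul_conj]
        _ = (starRingEnd ℂ) v * (v * K) := by ring
        _ = (starRingEnd ℂ) v * (α:ℂ) := by rw [heq]
        _ = (α:ℂ) * (starRingEnd ℂ) v := by ring
    have hvim2 : Complex.normSq v * K.im = α * (-(d * s.im)) := by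
      have h3 := congrArg Complex.im hconjv
      rw [Complex.im_ofReal_mul, Complex.im_ofReal_mul, Complex.conj_im, hvim] at h3
      exact h3
    have hν : 0 ≤ Complex.normSq v := Complex.normSq_nonneg v
    rcases lt_or_gt_of_ne hne with hneg | hpos
    · -- s.im < 0 : conjugate
      have hcabs : ‖(starRingEnd ℂ) s‖ ≤ 1 := by
        rwa [Complex.norm_conj]
      have hcim : 0 ≤ ((starRingEnd ℂ) s).im := by
        rw [Complex.conj_im]
        linarith
      have hT := lemT hcabs hcim L hL
      have hconjsum : ∑ ℓ ∈ range L, ((starRingEnd ℂ) s)^(2*ℓ+1)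
          = (starRingEnd ℂ) (∑ ℓ ∈ range L, s^(2*ℓ+1)) := by
        rw [map_sum]
        exact Finset.sum_congr rfl fun ℓ _ => (map_pow _ _ _).symm
      rw [hconjsum, Complex.conj_im] at hT
      have hWle : W ≤ 0 := by rw [hW]; linarith
      have hKimle : K.im ≤ 0 := by nlinarith [hKim]
      have hL1 : Complex.normSq v * K.im ≤ 0 := mul_nonpos_of_nonneg_of_nonpos hν hKimle
      have hR1 : 0 < α * -(d * s.im) := mul_pos hα (by nlinarith)
      linarith [hvim2]
    · -- s.im > 0
      have hT := lemT habs (by linarith : 0 ≤ s.im) L hL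
      have hWge : 0 ≤ W := hT
      have hKimge : 0 ≤ K.im := by nlinarith [hKim]
      have hL1 : 0 ≤ Complex.normSq v * K.im := mul_nonneg hν hKimge
      have hR1 : α * -(d * s.im) < 0 := mul_neg_of_pos_of_neg hα (by nlinarith [mul_pos hd0 hpos])
      linarith [hvim2]
  -- s is the real number t
  set t : ℝ := s.re with htdef
  have hst : s = (t:ℂ) := Complex.ext rfl (by simp [hsim])
  have hKreal : K = ((∑ ℓ ∈ range L, t^(2*ℓ) : ℝ) : ℂ) := by
    rw [hK, hst]
    push_cast
    rfl
  have heqR : (d * t - c) * (∑ ℓ ∈ range L, t^(2*ℓ)) = α := by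
    have h4 := heq
    rw [hst, hKreal] at h4
    exact_mod_cast h4
  have hKr1 : (1:ℝ) ≤ ∑ ℓ ∈ range L, t^(2*ℓ) := by
    have h0 : ∀ ℓ ∈ range L, 0 ≤ t^(2*ℓ) := by
      intro ℓ _
      rw [pow_mul]
      positivity
    calc (1:ℝ) = t^(2*0) := by norm_num
      _ ≤ ∑ ℓ ∈ range L, t^(2*ℓ) := Finset.single_le_sum h0 (Finset.mem_range.2 (by omega))
  have hdt : 0 < d * t - c := by
    by_contra hcon
    push_neg at hcon
    nlinarith [heqR, hKr1]
  have htb : b < t := by nlinarith [hdt]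
  have ht1 : t ≤ 1 := by
    have := habs
    rw [hst, Complex.norm_real, Real.norm_eq_abs] at this
    exact le_trans (le_abs_self t) this
  have hμform : μ = ((e/(b - t) : ℝ) : ℂ) := by
    have hbt : b - t ≠ 0 := by linarith
    have h5 : (e:ℂ)/μ = ((b - t : ℝ):ℂ) := by
      push_cast
      rw [← hst, hs]
      ring
    have h6 : μ * ((b - t : ℝ):ℂ) = (e:ℂ) := by
      rw [← h5]
      field_simp
    rw [Complex.ofReal_div, eq_div_iff (Complex.ofReal_ne_zero.2 hbt)]
    exact h6
  exact ⟨t, htb, ht1, heqR, hμform⟩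


lemma ts_mono {d c α : ℝ} (hd0 : 0 < d) (hα : 0 < α) (L : ℕ) (hL : 1 ≤ L) :
    ∀ t t' : ℝ, 0 ≤ t → t < t' →
      (d*t - c) * (∑ ℓ ∈ range L, t^(2*ℓ)) = α →
      (d*t' - c) * (∑ ℓ ∈ range L, t'^(2*ℓ)) = α → False := by
  intro t t' ht hlt he1 he2
  have hK : ∀ u : ℝ, (1:ℝ) ≤ ∑ ℓ ∈ range L, u^(2*ℓ) := by
    intro u
    have h0 : ∀ ℓ ∈ range L, 0 ≤ u^(2*ℓ) := by
      intro ℓ _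
      rw [pow_mul]
      positivity
    calc (1:ℝ) = u^(2*0) := by norm_num
      _ ≤ ∑ ℓ ∈ range L, u^(2*ℓ) := Finset.single_le_sum h0 (Finset.mem_range.2 (by omega))
  have hK1 := hK t
  have hK2 := hK t'
  have hdt : 0 < d * t - c := by
    by_contra hcon
    push_neg at hcon
    nlinarith [he1, hK1]
  have hdt' : d * t - c < d * t' - c := by nlinarith
  have hKle : ∑ ℓ ∈ range L, t^(2*ℓ) ≤ ∑ ℓ ∈ range L, t'^(2*ℓ) :=
    Finset.sum_le_sum fun ℓ _ => pow_le_pow_left₀ ht hlt.le _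
  have h3 : (d*t - c) * (∑ ℓ ∈ range L, t^(2*ℓ)) < (d*t' - c) * (∑ ℓ ∈ range L, t^(2*ℓ)) :=
    mul_lt_mul_of_pos_right hdt' (by linarith)
  have h4 : (d*t' - c) * (∑ ℓ ∈ range L, t^(2*ℓ)) ≤ (d*t' - c) * (∑ ℓ ∈ range L, t'^(2*ℓ)) :=
    mul_le_mul_of_nonneg_left hKle (by linarith)
  linarith [he1, he2]

theorem roots_in_disc_or_isolated (σ δt Δt ΔT α : ℝ) (L : ℕ) (hσ : σ < 0)
    (hδt : 0 < δt) (hδtΔt : δt < Δt) (hΔtΔT : Δt ≤ ΔT) (hα : 0 < α) (hL : 1 ≤ L) :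
    ∃ μstar : ℝ, μstar < 0 ∧
      ∀ μ : ℂ,
        Ppoly (betaF σ ΔT Δt) (betaF σ ΔT Δt - betaF σ ΔT δt)
          (gammaF σ ΔT Δt) (gammaF σ ΔT Δt - gammaF σ ΔT δt) α L μ = 0 →
        (μ ∈ Dsigma (betaF σ ΔT Δt) (betaF σ ΔT Δt - betaF σ ΔT δt) ∨ μ = (μstar : ℂ)) := by
  have hΔ : (0:ℝ) < Δt := by linarith
  have hT : (0:ℝ) < ΔT := by linarith
  set b : ℝ := betaF σ ΔT Δt with hbdef
  set e : ℝ := betaF σ ΔT Δt - betaF σ ΔT δt with hedef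
  set g : ℝ := gammaF σ ΔT Δt with hgdef
  set h : ℝ := gammaF σ ΔT Δt - gammaF σ ΔT δt with hhdef
  have hb0 : 0 < b := betaF_pos hσ hΔ
  have hb1 : b < 1 := betaF_lt_one hσ hΔ hT
  have he : 0 < e := sub_pos.2 (deltaBeta_pos hσ hδt hδtΔt hΔtΔT)
  have hg : 0 < g := gammaF_pos hσ hΔ hT
  have hh : h < 0 := sub_neg.2 (deltaGamma_neg hσ hδt hδtΔt hΔtΔT)
  by_cases hex : ∃ μ : ℂ, Ppoly b e g h α L μ = 0 ∧ μ ∉ Dsigma b e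
  · obtain ⟨μ₁, hr1, ho1⟩ := hex
    obtain ⟨t₁, ht1b, ht11, heq1, hform1⟩ :=
      key_root b e g h α L hb0 hb1 he hg hh hα hL μ₁ hr1 ho1
    refine ⟨e/(b - t₁), div_neg_of_pos_of_neg he (by linarith), ?_⟩
    intro μ hroot
    by_cases hin : μ ∈ Dsigma b e
    · exact Or.inl hin
    · obtain ⟨t₂, ht2b, ht21, heq2, hform2⟩ :=
        key_root b e g h α L hb0 hb1 he hg hh hα hL μ hroot hin
      have hd0 : 0 < -h/e := div_pos (by linarith) he
      have hteq : t₁ = t₂ := by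
        rcases lt_trichotomy t₁ t₂ with hlt | heqq | hgt
        · exact absurd (ts_mono hd0 hα L hL t₁ t₂ (by linarith) hlt heq1 heq2) not_false
        · exact heqq
        · exact absurd (ts_mono hd0 hα L hL t₂ t₁ (by linarith) hgt heq2 heq1) not_false
      right
      rw [hform2, hteq]
  · refine ⟨-1, by norm_num, ?_⟩
    intro μ hroot
    by_cases hin : μ ∈ Dsigma b e
    · exact Or.inl hin
    · exact absurd ⟨μ, hroot, hin⟩ hex
end

section
/- Let σ < 0, 0 < δt < Δt ≤ ΔT, α > 0, L ≥ 1, and let μ be a nonzero complex number. Set a := β − δβ/μ and b := (−γ + δγ/μ)/α. Suppose the complex sequences (v_ℓ)_{ℓ=0}^{L} and (w_ℓ)_{ℓ=1}^{L} satisfy v_0 = 0, v_ℓ = a·v_{ℓ−1} + b·w_ℓ for 1 ≤ ℓ ≤ L, w_ℓ = a·w_{ℓ+1} for 1 ≤ ℓ ≤ L−1, w_L = v_L, and w_L ≠ 0. Then w_ℓ = a^{L−ℓ}·w_L for 1 ≤ ℓ ≤ L, v_L = (∑_{ℓ=1}^{L} a^{2(L−ℓ)}·b)·w_L, and P(μ)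 = 0. -/
theorem recurrence_implies_root (σ δt Δt ΔT α : ℝ) (L : ℕ) (hσ : σ < 0)
    (hδt : 0 < δt) (hδtΔt : δt < Δt) (hΔtΔT : Δt ≤ ΔT) (hα : 0 < α) (hL : 1 ≤ L)
    (μ : ℂ) (hμ : μ ≠ 0) (a b : ℂ)
    (ha : a = ((betaF σ ΔT Δt : ℝ) : ℂ) - ((betaF σ ΔT Δt - betaF σ ΔT δt : ℝ) : ℂ) / μ)
    (hb : b = (-((gammaF σ ΔT Δt : ℝ) : ℂ) +
        ((gammaF σ ΔT Δt - gammaF σ ΔT δt : ℝ) : ℂ) / μ) / (α : ℂ))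
    (v w : ℕ → ℂ)
    (hv0 : v 0 = 0)
    (hv : ∀ ℓ : ℕ, 1 ≤ ℓ → ℓ ≤ L → v ℓ = a * v (ℓ - 1) + b * w ℓ)
    (hw : ∀ ℓ : ℕ, 1 ≤ ℓ → ℓ ≤ L - 1 → w ℓ = a * w (ℓ + 1))
    (hwL : w L = v L) (hne : w L ≠ 0) :
    (∀ ℓ : ℕ, 1 ≤ ℓ → ℓ ≤ L → w ℓ = a ^ (L - ℓ) * w L) ∧
    v L = (∑ ℓ ∈ Finset.Icc 1 L, a ^ (2 * (L - ℓ)) * b) * w L ∧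
    Ppoly (betaF σ ΔT Δt) (betaF σ ΔT Δt - betaF σ ΔT δt)
      (gammaF σ ΔT Δt) (gammaF σ ΔT Δt - gammaF σ ΔT δt) α L μ = 0 := by
  have hαC : (α : ℂ) ≠ 0 := by exact_mod_cast hα.ne'
  -- Step 1: backwards recursion for w
  have key : ∀ d, d ≤ L - 1 → w (L - d) = a ^ d * w L := by
    intro d
    induction d with
    | zero => intro _; simp
    | succ d ih =>
      intro hd
      have h3 := hw (L - (d + 1)) (by omega) (by omega)
      have heq : L - (d + 1) + 1 = L - d := by omega
      rw [heq] at h3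
      rw [h3, ih (by omega), pow_succ]
      ring
  have hwgen : ∀ ℓ : ℕ, 1 ≤ ℓ → ℓ ≤ L → w ℓ = a ^ (L - ℓ) * w L := by
    intro ℓ h1 h2
    have := key (L - ℓ) (by omega)
    rwa [Nat.sub_sub_self h2] at this
  -- Step 2: formula for v
  have hvgen : ∀ n, n ≤ L → v n = ∑ ℓ ∈ Finset.Icc 1 n, a ^ (n - ℓ) * (b * w ℓ) := by
    intro n
    induction n with
    | zero => intro _; simp [hv0]
    | succ n ih =>
      intro hn
      rw [hv (n + 1) (by omega) hn]
      simp only [Nat.add_sub_cancel]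
      rw [ih (by omega), Finset.sum_Icc_succ_top (by omega : 1 ≤ n + 1), Finset.mul_sum]
      rw [Nat.sub_self, pow_zero, one_mul]
      congr 1
      apply Finset.sum_congr rfl
      intro ℓ hℓ
      have hmem := Finset.mem_Icc.mp hℓ
      have h : n + 1 - ℓ = (n - ℓ) + 1 := by omega
      rw [h, pow_succ]
      ring
  have hvL : v L = (∑ ℓ ∈ Finset.Icc 1 L, a ^ (2 * (L - ℓ)) * b) * w L := by
    rw [hvgen L le_rfl, Finset.sum_mul]
    apply Finset.sum_congr rfl
    intro ℓ hℓ
    have hmem := Finset.mem_Icc.mp hℓ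
    rw [hwgen ℓ hmem.1 hmem.2, two_mul, pow_add]
    ring
  refine ⟨hwgen, hvL, ?_⟩
  -- Step 3: the sum equals 1
  have hS : (∑ ℓ ∈ Finset.Icc 1 L, a ^ (2 * (L - ℓ)) * b) = 1 := by
    have h := hwL
    rw [hvL] at h
    have h0 : ((∑ ℓ ∈ Finset.Icc 1 L, a ^ (2 * (L - ℓ)) * b) - 1) * w L = 0 := by
      rw [sub_mul, one_mul, ← h, sub_self]
    rcases mul_eq_zero.mp h0 with h' | h'
    · linear_combination h'
    · exact absurd h' hne
  have hS' : (∑ j ∈ Finset.range L, a ^ (2 * j) * b) = 1 := by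
    rw [← hS]
    apply Finset.sum_nbij' (fun j => L - j) (fun ℓ => L - ℓ)
    · intro j hj; simp only [Finset.mem_range] at hj; simp only [Finset.mem_Icc]; omega
    · intro ℓ hℓ; simp only [Finset.mem_Icc] at hℓ; simp only [Finset.mem_range]; omega
    · intro j hj; simp only [Finset.mem_range] at hj; omega
    · intro ℓ hℓ; simp only [Finset.mem_Icc] at hℓ; omega
    · intro j hj; simp only [Finset.mem_range] at hj
      congr 2
      omega
  -- Step 4: P(μ) = 0
  set β : ℂ := ((betaF σ ΔT Δt : ℝ) : ℂ)
  set δβ : ℂ := ((betaF σ ΔT Δt - betaF σ ΔT δt : ℝ) : ℂ)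
  set γ : ℂ := ((gammaF σ ΔT Δt : ℝ) : ℂ)
  set δγ : ℂ := ((gammaF σ ΔT Δt - gammaF σ ΔT δt : ℝ) : ℂ)
  have haμ : a * μ = μ * β - δβ := by
    rw [ha]; field_simp
  have hbμ : μ * γ - δγ = -(b * ((α : ℂ) * μ)) := by
    rw [hb]; field_simp; ring
  have hterm : ∀ j ∈ Finset.range L,
      (μ * γ - δγ) * (μ ^ (2 * (L - j - 1)) * (μ * β - δβ) ^ (2 * j))
        = -((α : ℂ) * μ ^ (2 * L - 1) * (a ^ (2 * j) * b)) := by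
    intro j hj
    have hjL := Finset.mem_range.mp hj
    have hexp : 2 * L - 1 = 2 * (L - j - 1) + 2 * j + 1 := by omega
    rw [hexp, hbμ, ← haμ, mul_pow, pow_add, pow_add, pow_one]
    ring
  unfold Ppoly
  rw [Finset.mul_sum, Finset.sum_congr rfl hterm]
  rw [Finset.sum_neg_distrib, ← Finset.mul_sum, hS']
  ring
end
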